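/- For any prime p ≥ 5, ∑_{k=0}^{p-1} k·C(2k,k) ≡ (2/3)·(p − (p/3)) (mod p²), where 2/3 is interpreted as 2 times the inverse of 3 modulo p². -/

import Mathlib

open Finset

def legendre3 (p : ℕ) : ℤ :=
  if p % 3 = 1 then 1 else if p % 3 = 2 then -1 else 0

/-- companion weight: the "real part" coefficient of `ζ^m` for a primitive cube root `ζ`. -/
def beta3' (m : ℕ) : ℤ := if m % 3 = 0 then 1 else if m % 3 = 2 then -1 else 0

lemma legendre3_succ (m : ℕ) : legendre3 (m+1) = beta3' m - legendre3 m := by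
  have h : m % 3 = 0 ∨ m % 3 = 1 ∨ m % 3 = 2 := by omega
  rcases h with h | h | h <;>
    · have h1 : (m+1) % 3 = (m % 3 + 1) % 3 := by omega
      simp [legendre3, beta3', h, h1]

lemma beta3'_succ (m : ℕ) : beta3' (m+1) = - legendre3 m := by
  have h : m % 3 = 0 ∨ m % 3 = 1 ∨ m % 3 = 2 := by omega
  rcases h with h | h | h <;>
    · have h1 : (m+1) % 3 = (m % 3 + 1) % 3 := by omega
      simp [legendre3, beta3', h, h1]

lemma legendre3_three (j : ℕ) : legendre3 j + legendre3 (j+1) + legendre3 (j+2) = 0 := by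
  rw [legendre3_succ (j+1), legendre3_succ j, beta3'_succ j]; ring

lemma legendre3_one : legendre3 1 = 1 := by simp [legendre3]
lemma legendre3_two : legendre3 2 = -1 := by simp [legendre3]

/-- Exact binomial identity: `∑ χ₃(m)·C(n,m) = (-1)ⁿ χ₃(2n)` (and companion). -/
lemma LZ (n : ℕ) :
    (∑ m ∈ range (n+1), legendre3 m * (n.choose m : ℤ)) = (-1)^n * legendre3 (2*n) ∧
    (∑ m ∈ range (n+1), beta3' m * (n.choose m : ℤ)) = (-1)^n * beta3' (2*n) := by
  induction n with
  | zero => simp [legendre3, beta3']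
  | succ n ih =>
    obtain ⟨ha, hb⟩ := ih
    have shift : ∀ f : ℕ → ℤ,
        (∑ i ∈ range (n+1), f (i+1) * ((n.choose (i+1) : ℕ) : ℤ))
          = (∑ m ∈ range (n+1), f m * (n.choose m : ℤ)) - f 0 := by
      intro f
      have h1 := Finset.sum_range_succ' (fun m => f m * (n.choose m : ℤ)) (n+1)
      have h2 : (∑ m ∈ range (n+2), f m * (n.choose m : ℤ))
          = (∑ m ∈ range (n+1), f m * (n.choose m : ℤ)) := by
        rw [Finset.sum_range_succ]
        simp [Nat.choose_succ_self]
      rw [h2] at h1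
      simp only [Nat.choose_zero_right, Nat.cast_one, mul_one] at h1
      linarith
    have expand : ∀ f : ℕ → ℤ,
        (∑ m ∈ range (n+2), f m * ((n+1).choose m : ℤ))
          = f 0 + (∑ i ∈ range (n+1), f (i+1) * (n.choose i : ℤ))
            + (∑ i ∈ range (n+1), f (i+1) * (n.choose (i+1) : ℤ)) := by
      intro f
      rw [Finset.sum_range_succ' (fun m => f m * ((n+1).choose m : ℤ)) (n+1)]
      simp only [Nat.choose_zero_right, Nat.cast_one, mul_one]
      have : ∀ i, f (i+1) * (((n+1).choose (i+1) : ℕ) : ℤ)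
          = f (i+1) * (n.choose i : ℤ) + f (i+1) * (n.choose (i+1) : ℤ) := by
        intro i
        rw [Nat.choose_succ_succ' n i]
        push_cast
        ring
      rw [Finset.sum_congr rfl (fun i _ => this i), Finset.sum_add_distrib]
      ring
    constructor
    · rw [expand legendre3]
      have e1 : (∑ i ∈ range (n+1), legendre3 (i+1) * (n.choose i : ℤ))
          = (∑ m ∈ range (n+1), beta3' m * (n.choose m : ℤ))
            - (∑ m ∈ range (n+1), legendre3 m * (n.choose m : ℤ)) := by
        rw [← Finset.sum_sub_distrib]
        exact Finset.sum_congr rfl (fun i _ => by rw [legendre3_succ]; ring)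
      rw [e1, shift legendre3, ha, hb]
      have h2n : legendre3 (2*(n+1)) = - beta3' (2*n) := by
        have : 2*(n+1) = (2*n+1)+1 := by ring
        rw [this, legendre3_succ, beta3'_succ, legendre3_succ]; ring
      rw [h2n]; ring
    · rw [expand beta3']
      have e1 : (∑ i ∈ range (n+1), beta3' (i+1) * (n.choose i : ℤ))
          = - (∑ m ∈ range (n+1), legendre3 m * (n.choose m : ℤ)) := by
        rw [← Finset.sum_neg_distrib]
        exact Finset.sum_congr rfl (fun i _ => by rw [beta3'_succ]; ring)
      have e2 : (∑ i ∈ range (n+1), beta3' (i+1) * (n.choose (i+1) : ℤ))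
          = (∑ m ∈ range (n+1), beta3' m * (n.choose m : ℤ)) - beta3' 0 := shift beta3'
      rw [e1, e2, ha, hb]
      have h2n : beta3' (2*(n+1)) = legendre3 (2*n) - beta3' (2*n) := by
        have : 2*(n+1) = (2*n+1)+1 := by ring
        rw [this, beta3'_succ, legendre3_succ]; ring
      rw [h2n]; ring

/-- recurrence for the shifted central-binomial sums. -/
lemma Urec (p e : ℕ) :
    (∑ k ∈ range p, ((2*k).choose (k+e) : ℤ)) + (∑ k ∈ range p, ((2*k).choose (k+e+1) : ℤ))
      + (∑ k ∈ range p, ((2*k).choose (k+e+2) : ℤ))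
    = ((2*p).choose (p+e+1) : ℤ) := by
  have pascal : ∀ k : ℕ, ((2*(k+1)).choose (k+1+e+1) : ℤ)
      = ((2*k).choose (k+e) : ℤ) + ((2*k).choose (k+e+1) : ℤ)
        + (((2*k).choose (k+e+1) : ℤ) + ((2*k).choose (k+e+2) : ℤ)) := by
    intro k
    have h1 : 2*(k+1) = (2*k+1)+1 := by ring
    have h2 : k+1+e+1 = (k+e+1)+1 := by ring
    rw [h1, h2, Nat.choose_succ_succ (2*k+1) (k+e+1)]
    have h3 : (2*k+1).choose (k+e+1) = (2*k).choose (k+e) + (2*k).choose (k+e+1) := by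
      rw [Nat.choose_succ_succ (2*k) (k+e)]
    have h4 : (2*k+1).choose (k+e+1+1) = (2*k).choose (k+e+1) + (2*k).choose (k+e+2) := by
      rw [Nat.choose_succ_succ (2*k) (k+e+1)]
    rw [h3, h4]
    push_cast
    ring
  have key : (∑ k ∈ range p, ((2*(k+1)).choose (k+1+e+1) : ℤ))
      = (∑ k ∈ range p, ((2*k).choose (k+e+1) : ℤ)) + ((2*p).choose (p+e+1) : ℤ) := by
    have h1 := Finset.sum_range_succ' (fun k => ((2*k).choose (k+e+1) : ℤ)) p
    have h2 := Finset.sum_range_succ (fun k => ((2*k).choose (k+e+1) : ℤ)) p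
    have h0 : ((2*0).choose (0+e+1) : ℤ) = 0 := by
      norm_num [Nat.choose_eq_zero_of_lt]
    rw [h0, add_zero] at h1
    rw [h1] at h2
    rw [← h2]
  rw [show (∑ k ∈ range p, ((2*(k+1)).choose (k+1+e+1) : ℤ))
      = ∑ k ∈ range p, (((2*k).choose (k+e) : ℤ) + ((2*k).choose (k+e+1) : ℤ)
          + (((2*k).choose (k+e+1) : ℤ) + ((2*k).choose (k+e+2) : ℤ)))
    from Finset.sum_congr rfl (fun k _ => pascal k)] at key
  rw [Finset.sum_add_distrib, Finset.sum_add_distrib, Finset.sum_add_distrib] at key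
  linear_combination key

/-- closed form for the shifted sums, by downward induction. -/
lemma Uform (p : ℕ) (hp : 1 ≤ p) : ∀ t, t ≤ p →
    (∑ k ∈ range p, ((2*k).choose (k+(p-t)) : ℤ))
      = ∑ m ∈ Icc (p-t+1) p, legendre3 (m-(p-t)) * ((2*p).choose (p+m) : ℤ) := by
  intro t
  induction t using Nat.strong_induction_on with
  | _ t IH =>
    match t with
    | 0 =>
      intro _
      simp only [Nat.sub_zero]
      rw [Finset.Icc_eq_empty (by omega), Finset.sum_empty]
      apply Finset.sum_eq_zero
      intro k hk
      simp only [Finset.mem_range] at hk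
      have : 2*k < k + p := by omega
      rw [Nat.choose_eq_zero_of_lt this, Nat.cast_zero]
    | 1 =>
      intro _
      have h1 : p - 1 + 1 = p := by omega
      rw [h1, Finset.Icc_self, Finset.sum_singleton]
      have h2 : p - (p-1) = 1 := by omega
      have h3 : p + p = 2*p := by ring
      rw [h2, legendre3_one, h3, Nat.choose_self, Nat.cast_one, one_mul]
      rw [Finset.sum_eq_single_of_mem (p-1) (Finset.mem_range.mpr (by omega))]
      · have h4 : (p-1) + (p-1) = 2*(p-1) := by omega
        rw [h4, Nat.choose_self, Nat.cast_one]
      · intro k hk hne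
        simp only [Finset.mem_range] at hk
        have : 2*k < k + (p-1) := by omega
        rw [Nat.choose_eq_zero_of_lt this, Nat.cast_zero]
    | (s+2) =>
      intro hle
      set d := p - (s+2) with hd
      have hd1 : p - (s+1) = d + 1 := by omega
      have hd2 : p - s = d + 2 := by omega
      have hdp : d + 2 ≤ p := by omega
      have IH1 := IH (s+1) (by omega) (by omega)
      have IH2 := IH s (by omega) (by omega)
      rw [hd1] at IH1
      rw [hd2] at IH2
      have ext2 : (∑ m ∈ Icc (d+1+1) p, legendre3 (m-(d+1)) * ((2*p).choose (p+m) : ℤ))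
          = ∑ m ∈ Icc (d+1) p, (if d+2 ≤ m then legendre3 (m-(d+1)) * ((2*p).choose (p+m) : ℤ) else 0) := by
        rw [← Finset.sum_subset
            (Finset.Icc_subset_Icc_left (by omega : d+1 ≤ d+1+1))
            (fun x hxt hx => by
              rw [if_neg]
              simp only [Finset.mem_Icc] at hx hxt
              omega)]
        apply Finset.sum_congr rfl
        intro m hm
        simp only [Finset.mem_Icc] at hm
        rw [if_pos (by omega)]
      have ext3 : (∑ m ∈ Icc (d+2+1) p, legendre3 (m-(d+2)) * ((2*p).choose (p+m) : ℤ))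
          = ∑ m ∈ Icc (d+1) p, (if d+3 ≤ m then legendre3 (m-(d+2)) * ((2*p).choose (p+m) : ℤ) else 0) := by
        rw [← Finset.sum_subset
            (Finset.Icc_subset_Icc_left (by omega : d+1 ≤ d+2+1))
            (fun x hxt hx => by
              rw [if_neg]
              simp only [Finset.mem_Icc] at hx hxt
              omega)]
        apply Finset.sum_congr rfl
        intro m hm
        simp only [Finset.mem_Icc] at hm
        rw [if_pos (by omega)]
      have claim : (∑ m ∈ Icc (d+1) p, legendre3 (m-d) * ((2*p).choose (p+m) : ℤ))
          + (∑ m ∈ Icc (d+1+1) p, legendre3 (m-(d+1)) * ((2*p).choose (p+m) : ℤ))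
          + (∑ m ∈ Icc (d+2+1) p, legendre3 (m-(d+2)) * ((2*p).choose (p+m) : ℤ))
          = ((2*p).choose (p+(d+1)) : ℤ) := by
        rw [ext2, ext3, ← Finset.sum_add_distrib, ← Finset.sum_add_distrib]
        have pointwise : ∀ m ∈ Icc (d+1) p,
            legendre3 (m-d) * ((2*p).choose (p+m) : ℤ)
              + (if d+2 ≤ m then legendre3 (m-(d+1)) * ((2*p).choose (p+m) : ℤ) else 0)
              + (if d+3 ≤ m then legendre3 (m-(d+2)) * ((2*p).choose (p+m) : ℤ) else 0)
            = if m = d+1 then ((2*p).choose (p+m) : ℤ) else 0 := by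
          intro m hm
          simp only [Finset.mem_Icc] at hm
          rcases Nat.lt_or_ge m (d+2) with h | h
          · have hm1 : m = d+1 := by omega
            rw [if_neg (by omega), if_neg (by omega), if_pos hm1, hm1]
            have e1 : d+1-d = 1 := by omega
            rw [e1, legendre3_one, one_mul, add_zero, add_zero]
          · rcases Nat.lt_or_ge m (d+3) with h2 | h2
            · have hm2 : m = d+2 := by omega
              rw [if_pos (by omega), if_neg (by omega), if_neg (by omega), hm2]
              have e1 : d+2-d = 2 := by omega
              have e2 : d+2-(d+1) = 1 := by omega
              rw [e1, e2, legendre3_one, legendre3_two]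
              ring
            · rw [if_pos (by omega), if_pos (by omega), if_neg (by omega)]
              have e0 : m - d = (m-(d+2)) + 2 := by omega
              have e1 : m - (d+1) = (m-(d+2)) + 1 := by omega
              rw [e0, e1]
              linear_combination (legendre3_three (m-(d+2))) * (((2*p).choose (p+m) : ℤ))
        rw [Finset.sum_congr rfl pointwise, Finset.sum_ite_eq' (Icc (d+1) p) (d+1)]
        rw [if_pos (Finset.mem_Icc.mpr ⟨le_refl _, by omega⟩)]
      have hrec := Urec p d
      simp only [add_assoc] at hrec
      norm_num at hrec IH1 IH2 claim ⊢
      rw [IH1, IH2] at hrec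
      linarith [hrec, claim]

/-- Vandermonde-based congruence `C(2p, p+m) ≡ 2·C(p,m) (mod p²)`. -/
lemma cong2 (p : ℕ) (hp : p.Prime) (m : ℕ) (hm : m < p) :
    ((p:ℤ)^2) ∣ ((2*p).choose (p+m) : ℤ) - 2 * (p.choose m : ℤ) := by
  have hvdm : (2*p).choose (p+m) = ∑ i ∈ range (p+m+1), p.choose i * p.choose (p+m-i) := by
    rw [two_mul, Nat.add_choose_eq]
    rw [Finset.Nat.sum_antidiagonal_eq_sum_range_succ_mk]
  have hmem_p : p ∈ range (p+m+1) := Finset.mem_range.mpr (by omega)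
  have hmem_m : m ∈ (range (p+m+1)) \ {p} := by
    simp only [Finset.mem_sdiff, Finset.mem_range, Finset.mem_singleton]
    omega
  have split1 := Finset.sum_eq_sum_sdiff_singleton_add hmem_p
    (fun i => (p.choose i * p.choose (p+m-i) : ℤ))
  have split2 := Finset.sum_eq_sum_sdiff_singleton_add hmem_m
    (fun i => (p.choose i * p.choose (p+m-i) : ℤ))
  have fp : ((p.choose p * p.choose (p+m-p) : ℕ) : ℤ) = (p.choose m : ℤ) := by
    have : p+m-p = m := by omega
    rw [this, Nat.choose_self]
    push_cast
    ring
  have fm : ((p.choose m * p.choose (p+m-m) : ℕ) : ℤ) = (p.choose m : ℤ) := by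
    have : p+m-m = p := by omega
    rw [this, Nat.choose_self]
    push_cast
    ring
  have hS : ((2*p).choose (p+m) : ℤ)
      = (∑ i ∈ ((range (p+m+1)) \ {p}) \ {m}, (p.choose i * p.choose (p+m-i) : ℤ))
        + (p.choose m : ℤ) + (p.choose m : ℤ) := by
    rw [hvdm]
    push_cast
    rw [split1, split2]
    push_cast at fp fm
    rw [fp, fm]
  rw [hS]
  have : (∑ i ∈ ((range (p+m+1)) \ {p}) \ {m}, (p.choose i * p.choose (p+m-i) : ℤ))
      + (p.choose m : ℤ) + (p.choose m : ℤ) - 2 * (p.choose m : ℤ)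
      = ∑ i ∈ ((range (p+m+1)) \ {p}) \ {m}, (p.choose i * p.choose (p+m-i) : ℤ) := by ring
  rw [this]
  apply Finset.dvd_sum
  intro i hi
  simp only [Finset.mem_sdiff, Finset.mem_range, Finset.mem_singleton] at hi
  obtain ⟨⟨hir, hip⟩, him⟩ := hi
  rcases Nat.lt_or_ge i m with h | h
  · have : p < p+m-i := by omega
    rw [Nat.choose_eq_zero_of_lt this]
    simp
  · rcases Nat.lt_or_ge p i with h2 | h2
    · rw [Nat.choose_eq_zero_of_lt h2]
      simp
    · have him' : m < i := by omega
      have hip' : i < p := by omega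
      have d1 : (p:ℤ) ∣ (p.choose i : ℤ) := by
        exact_mod_cast Int.natCast_dvd_natCast.mpr
          (Nat.Prime.dvd_choose_self hp (by omega) hip')
      have d2 : (p:ℤ) ∣ (p.choose (p+m-i) : ℤ) := by
        exact_mod_cast Int.natCast_dvd_natCast.mpr
          (Nat.Prime.dvd_choose_self hp (by omega) (by omega))
      have hsq : (p:ℤ)^2 = (p:ℤ) * (p:ℤ) := sq (p:ℤ)
      rw [hsq]
      exact mul_dvd_mul d1 d2

lemma telescope (n : ℕ) :
    (∑ k ∈ range n, (3*k+2) * ((2*k).choose k)) = n * ((2*n).choose n) := by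
  induction n with
  | zero => simp
  | succ n ih =>
    rw [Finset.sum_range_succ, ih]
    have h := Nat.succ_mul_centralBinom_succ n
    rw [Nat.centralBinom_eq_two_mul_choose, Nat.centralBinom_eq_two_mul_choose] at h
    have h2 : n * ((2*n).choose n) + (3*n+2) * ((2*n).choose n)
        = 2*(2*n+1) * ((2*n).choose n) := by ring
    rw [h2, ← h]

theorem sum_k_central_binom (p : ℕ) (hp : p.Prime) (hp5 : 5 ≤ p) :
    3 * (∑ k ∈ Finset.range p, (k : ℤ) * ((2 * k).choose k : ℤ)) ≡
      2 * ((p : ℤ) - legendre3 p) [ZMOD (p : ℤ) ^ 2] := by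
  have hp3 : p % 3 = 1 ∨ p % 3 = 2 := by
    rcases Nat.lt_or_ge (p % 3) 1 with h | h
    · exfalso
      have h3 : (3:ℕ) ∣ p := Nat.dvd_of_mod_eq_zero (by omega)
      rcases (Nat.Prime.eq_one_or_self_of_dvd hp 3 h3) with h' | h' <;> omega
    · omega
  set S := ∑ k ∈ Finset.range p, (k : ℤ) * ((2 * k).choose k : ℤ) with hS
  set T := ∑ k ∈ Finset.range p, ((2 * k).choose k : ℤ) with hT
  set ε := legendre3 p with hε
  -- Step 1: telescoping gives 3S + 2T = p·C(2p,p)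
  have teleZ : 3*S + 2*T = (p:ℤ) * ((2*p).choose p : ℤ) := by
    have t1 : 3*S + 2*T = ∑ k ∈ range p, (((3*k+2) * ((2*k).choose k) : ℕ) : ℤ) := by
      rw [hS, hT, Finset.mul_sum, Finset.mul_sum, ← Finset.sum_add_distrib]
      apply Finset.sum_congr rfl
      intro k _
      push_cast
      ring
    rw [t1, ← Nat.cast_sum, telescope p]
    push_cast
    ring
  -- Step 2: C(2p,p) ≡ 2 (mod p²)
  have d1 : ((p:ℤ)^2) ∣ ((2*p).choose p : ℤ) - 2 := by
    have := cong2 p hp 0 (by omega)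
    simpa using this
  -- Step 3: T ≡ ε (mod p²)
  have hU := Uform p (by omega) p (le_refl p)
  simp only [Nat.sub_self, Nat.add_zero, Nat.sub_zero, zero_add] at hU
  -- hU : T = ∑ m ∈ Icc 1 p, legendre3 m * C(2p, p+m)
  have hmem_top : p ∈ Icc 1 p := Finset.mem_Icc.mpr ⟨by omega, le_refl p⟩
  have hsplit := Finset.sum_eq_sum_sdiff_singleton_add hmem_top
    (fun m => legendre3 m * ((2*p).choose (p+m) : ℤ))
  have hIccEq : (Icc 1 p) \ {p} = Icc 1 (p-1) := by
    apply Finset.ext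
    intro x
    simp only [Finset.mem_sdiff, Finset.mem_Icc, Finset.mem_singleton]
    omega
  rw [hIccEq] at hsplit
  have htop : legendre3 p * (((2*p).choose (p+p) : ℕ) : ℤ) = ε := by
    rw [show p+p = 2*p from by ring, Nat.choose_self, Nat.cast_one, mul_one, hε]
  have hTW : T = (∑ m ∈ Icc 1 (p-1), legendre3 m * ((2*p).choose (p+m) : ℤ)) + ε := by
    rw [hT, hU, hsplit]
    rw [htop]
  -- the exact vanishing sum from LZ
  have hzero : (∑ m ∈ Icc 1 (p-1), legendre3 m * (p.choose m : ℤ)) = 0 := by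
    have hLZ := (LZ p).1
    have hpeel := Finset.sum_range_succ (fun m => legendre3 m * (p.choose m : ℤ)) p
    have hbot : (∑ m ∈ range p, legendre3 m * (p.choose m : ℤ))
        = legendre3 0 * (p.choose 0 : ℤ)
          + ∑ m ∈ Ico 1 p, legendre3 m * (p.choose m : ℤ) := by
      rw [Finset.range_eq_Ico]
      exact Finset.sum_eq_sum_Ico_succ_bot (by omega) _
    have hIco : Ico 1 p = Icc 1 (p-1) := by
      rw [← Finset.Ico_add_one_right_eq_Icc]
      congr 1
      omega
    have hodd : (-1:ℤ)^p = -1 := Odd.neg_one_pow (Nat.Prime.odd_of_ne_two hp (by omega))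
    have h2p : legendre3 (2*p) = - legendre3 p := by
      rcases hp3 with h | h
      · have h2 : (2*p) % 3 = 2 := by omega
        simp [legendre3, h, h2]
      · have h2 : (2*p) % 3 = 1 := by omega
        simp [legendre3, h, h2]
    rw [hpeel, hbot, hIco, h2p, hodd] at hLZ
    have h00 : legendre3 0 = 0 := by simp [legendre3]
    rw [h00] at hLZ
    simp only [Nat.choose_self, Nat.cast_one, mul_one, zero_mul, zero_add] at hLZ
    linarith [hLZ]
  -- W ≡ 0 (mod p²)
  have dW : ((p:ℤ)^2) ∣ (∑ m ∈ Icc 1 (p-1), legendre3 m * ((2*p).choose (p+m) : ℤ)) := by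
    have hre : (∑ m ∈ Icc 1 (p-1), legendre3 m * ((2*p).choose (p+m) : ℤ))
        = (∑ m ∈ Icc 1 (p-1),
            legendre3 m * (((2*p).choose (p+m) : ℤ) - 2 * (p.choose m : ℤ)))
          + 2 * (∑ m ∈ Icc 1 (p-1), legendre3 m * (p.choose m : ℤ)) := by
      rw [Finset.mul_sum, ← Finset.sum_add_distrib]
      apply Finset.sum_congr rfl
      intro m _
      ring
    rw [hre, hzero, mul_zero, add_zero]
    apply Finset.dvd_sum
    intro m hm
    simp only [Finset.mem_Icc] at hm
    exact Dvd.dvd.mul_left (cong2 p hp m (by omega)) _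
  have d2 : ((p:ℤ)^2) ∣ T - ε := by
    rw [hTW]
    simpa using dW
  -- combine
  rw [Int.ModEq]
  apply Int.ModEq.symm
  rw [Int.modEq_iff_dvd]
  have hkey : 3*S - 2*((p:ℤ) - ε)
      = (p:ℤ) * (((2*p).choose p : ℤ) - 2) - 2*(T - ε) := by
    linear_combination teleZ
  rw [hkey]
  exact dvd_sub (Dvd.dvd.mul_left d1 _) (Dvd.dvd.mul_left d2 _)
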